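/- (Lemma 4.8, key combinatorial step in the coding of primitive closed geodesics: two cyclically reduced words representing conjugate elements of a free group are cyclic rotations of one another.) Let α be a type with decidable equality, and let L₁, L₂ : List (α × Bool) be words that are reduced (containing no two adjacent entries of the form (x, b), (x, !b)) and cyclically reduced (if nonempty, the pair consisting of the last entry followed by the first entry is not of the form (x, b), (x, !b)). If the elements FreeGroup.mk L₁ and FreeGroup.mk L₂ of the free group FreeGroup α are conjugate (IsConj (FreeGroup.mk L₁) (FreeGroup.mk L₂)), then L₂ is a cyclic rotation of L₁: there exists k such that L₂ = L₁.rotate k. -/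

import Mathlib

/-- A word `L : List (α × Bool)` is reduced if it contains no two adjacent entries of the
form `(x, b), (x, !b)`. -/
def IsReducedWord {α : Type*} (L : List (α × Bool)) : Prop :=
  List.Chain' (fun a b => ¬(a.1 = b.1 ∧ b.2 = !a.2)) L

/-- A word `L : List (α × Bool)` is cyclically reduced if (when nonempty) the pair consisting
of the last entry followed by the first entry is not of the form `(x, b), (x, !b)`. -/
def IsCyclicallyReducedWord {α : Type*} (L : List (α × Bool)) : Prop :=
  ∀ a b, L.getLast? = some a → L.head? = some b → ¬(a.1 = b.1 ∧ b.2 = !a.2)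

namespace CRAux

variable {α : Type*}

/-- The letter-cancellation predicate. -/
abbrev Canc (a b : α × Bool) : Prop := a.1 = b.1 ∧ b.2 = !a.2

lemma isReducedWord_iff {L : List (α × Bool)} :
    IsReducedWord L ↔ List.Chain' (fun a b => ¬ Canc a b) L := Iff.rfl

lemma reduce_eq_self [DecidableEq α] {L : List (α × Bool)} (h : IsReducedWord L) :
    FreeGroup.reduce L = L := by
  induction L with
  | nil => rfl
  | cons x L ih =>
    rw [FreeGroup.reduce.cons, ih h.tail]
    cases L with
    | nil => rfl
    | cons y L' =>
      have hxy := (List.isChain_cons_cons.mp h).1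
      dsimp only
      rw [if_neg]
      rintro ⟨h1, h2⟩
      exact hxy ⟨h1, by simp [h2]⟩

lemma mk_inj [DecidableEq α] {L₁ L₂ : List (α × Bool)} (h₁ : IsReducedWord L₁)
    (h₂ : IsReducedWord L₂) (h : FreeGroup.mk L₁ = FreeGroup.mk L₂) : L₁ = L₂ := by
  have := FreeGroup.reduce.sound h
  rwa [reduce_eq_self h₁, reduce_eq_self h₂] at this

lemma chain'_doubled {u : List (α × Bool)} (h : IsReducedWord u)
    (hc : IsCyclicallyReducedWord u) :
    List.Chain' (fun a b => ¬ Canc a b) (u ++ u) := by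
  rw [show List.Chain' = List.IsChain from rfl, List.isChain_append]
  exact ⟨h, h, fun a ha b hb => hc a b ha hb⟩

lemma of_chain'_doubled {u : List (α × Bool)}
    (h : List.Chain' (fun a b => ¬ Canc a b) (u ++ u)) :
    IsReducedWord u ∧ IsCyclicallyReducedWord u := by
  rw [show List.Chain' = List.IsChain from rfl, List.isChain_append] at h
  exact ⟨h.1, fun a b ha hb => h.2.2 a ha b hb⟩

lemma chain'_tripled {u : List (α × Bool)} (h : IsReducedWord u)
    (hc : IsCyclicallyReducedWord u) :
    List.Chain' (fun a b => ¬ Canc a b) (u ++ u ++ u) := by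
  rw [List.append_assoc, show List.Chain' = List.IsChain from rfl, List.isChain_append]
  refine ⟨h, chain'_doubled h hc, fun a ha b hb => ?_⟩
  cases u with
  | nil => simp at ha
  | cons x v =>
    apply hc a b ha
    simpa using hb

lemma rotate_preserves {u : List (α × Bool)} (h : IsReducedWord u)
    (hc : IsCyclicallyReducedWord u) (k : ℕ) :
    IsReducedWord (u.rotate k) ∧ IsCyclicallyReducedWord (u.rotate k) := by
  rcases eq_or_ne u [] with rfl | hne
  · simpa using ⟨h, hc⟩
  have hlen : 0 < u.length := List.length_pos_iff.2 hne
  set m := k % u.length with hm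
  have hmle : m ≤ u.length := (Nat.mod_lt _ hlen).le
  have hrot : u.rotate k = u.drop m ++ u.take m := by
    rw [← List.rotate_mod, List.rotate_eq_drop_append_take hmle]
  apply of_chain'_doubled
  have h3 := chain'_tripled h hc
  apply h3.infix
  refine ⟨u.take m, u.drop m, ?_⟩
  rw [hrot]
  simp only [List.append_assoc]
  rw [← List.append_assoc (u.take m) (u.drop m), List.take_append_drop,
    ← List.append_assoc (u.take m) (u.drop m), List.take_append_drop]

lemma invRev_cons (x : α × Bool) (L : List (α × Bool)) :
    FreeGroup.invRev (x :: L) = FreeGroup.invRev L ++ [(x.1, !x.2)] := by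
  simp [FreeGroup.invRev]

lemma invRev_single (x : α × Bool) :
    FreeGroup.invRev [x] = [(x.1, !x.2)] := by
  simp [FreeGroup.invRev]

lemma mk_inv_single {a p : α × Bool} (h : Canc a p) :
    FreeGroup.mk [a] = (FreeGroup.mk [p])⁻¹ := by
  rw [FreeGroup.inv_mk, invRev_single]
  obtain ⟨a1, a2⟩ := a
  obtain ⟨h1, h2⟩ := h
  simp only at h1 h2
  subst h1
  rw [h2]
  simp

lemma key (u : List (α × Bool)) (hu : IsReducedWord u) (huc : IsCyclicallyReducedWord u)
    (hne : u ≠ []) (t : List (α × Bool)) :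
    ∃ s k, IsReducedWord (s ++ u.rotate k ++ FreeGroup.invRev s) ∧
      FreeGroup.mk t * FreeGroup.mk u * (FreeGroup.mk t)⁻¹ =
        FreeGroup.mk (s ++ u.rotate k ++ FreeGroup.invRev s) := by
  induction t with
  | nil =>
    refine ⟨[], 0, by simpa using hu, ?_⟩
    simp [← FreeGroup.one_eq_mk]
  | cons a t ih =>
    obtain ⟨s, k, hred, heq⟩ := ih
    have hsplit : FreeGroup.mk (a :: t) = FreeGroup.mk [a] * FreeGroup.mk t := by
      rw [FreeGroup.mul_mk]; rfl
    have hstep : FreeGroup.mk (a :: t) * FreeGroup.mk u * (FreeGroup.mk (a :: t))⁻¹ =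
        FreeGroup.mk [a] * FreeGroup.mk (s ++ u.rotate k ++ FreeGroup.invRev s) *
          (FreeGroup.mk [a])⁻¹ := by
      rw [hsplit, ← heq]
      group
    rcases s with _ | ⟨p, s'⟩
    · -- s = [] : the current word is the rotation v := u.rotate k
      simp only [List.nil_append, FreeGroup.invRev_empty, List.append_nil] at hred heq hstep ⊢
      obtain ⟨hvred, hvcyc⟩ := rotate_preserves hu huc k
      cases hv : u.rotate k with
      | nil => exact absurd (List.rotate_eq_nil_iff.mp hv) hne
      | cons x v =>
        rw [hv] at hstep hvred hvcyc
        by_cases hcanL : Canc a x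
        · -- left cancellation: rotate one more
          refine ⟨[], k + 1, ?_, ?_⟩
          · simpa using (rotate_preserves hu huc (k + 1)).1
          · have hrot1 : u.rotate (k + 1) = v ++ [x] := by
              rw [← List.rotate_rotate, hv, List.rotate_cons_succ, List.rotate_zero]
            simp only [List.nil_append, FreeGroup.invRev_empty, List.append_nil]
            rw [hstep, hrot1, mk_inv_single hcanL, ← FreeGroup.mul_mk]
            have : FreeGroup.mk (x :: v) = FreeGroup.mk [x] * FreeGroup.mk v := by
              rw [FreeGroup.mul_mk]; rfl
            rw [this]
            group
        · by_cases hlast : (x :: v).getLast (by simp) = a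
          · -- right cancellation: rotate to bring last letter to front
            have hdecomp : (x :: v) = (x :: v).dropLast ++ [a] := by
              conv_lhs => rw [← List.dropLast_append_getLast (l := x :: v) (by simp)]
              rw [hlast]
            obtain ⟨dl, hdl⟩ : ∃ dl, (x : α × Bool) :: v = dl ++ [a] := ⟨_, hdecomp⟩
            refine ⟨[], k + dl.length, ?_, ?_⟩
            · simpa using (rotate_preserves hu huc (k + dl.length)).1
            · have hrot2 : u.rotate (k + dl.length) = [a] ++ dl := by
                rw [← List.rotate_rotate, hv, hdl,
                  List.rotate_eq_drop_append_take (by simp), List.drop_left, List.take_left]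
              simp only [List.nil_append, FreeGroup.invRev_empty, List.append_nil]
              rw [hstep, hrot2, hdl, ← FreeGroup.mul_mk, ← FreeGroup.mul_mk]
              group
          · -- no cancellation: grow the conjugating word
            refine ⟨[a], k, ?_, ?_⟩
            · rw [hv, invRev_single]
              show List.Chain' _ ([a] ++ (x :: v) ++ [(a.1, !a.2)])
              rw [show List.Chain' = List.IsChain from rfl, List.isChain_append, List.isChain_append]
              refine ⟨⟨List.isChain_singleton a, hvred, ?_⟩, List.isChain_singleton _, ?_⟩
              · intro c hc b hb
                simp only [List.getLast?_singleton, Option.mem_some_iff] at hc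
                simp only [List.head?_cons, Option.mem_some_iff] at hb
                subst hc; subst hb
                exact hcanL
              · intro c hc b hb
                simp only [List.head?_singleton, Option.mem_some_iff] at hb
                subst hb
                rw [List.getLast?_append_of_ne_nil _ (by simp),
                  List.getLast?_eq_getLast (by simp), Option.mem_some_iff] at hc
                rintro ⟨h1, h2⟩
                apply hlast
                rw [hc]
                exact Prod.ext h1 (Bool.not_inj h2).symm
            · rw [hv, hstep]
              simp [FreeGroup.inv_mk, invRev_single, FreeGroup.mul_mk, List.append_assoc]
    · -- s = p :: s'
      by_cases hcan : Canc a p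
      · -- a cancels with the head of s: shrink the conjugating word
        refine ⟨s', k, ?_, ?_⟩
        · apply hred.infix
          refine ⟨[p], [(p.1, !p.2)], ?_⟩
          rw [invRev_cons]
          simp [List.append_assoc]
        · have hW : FreeGroup.mk ((p :: s') ++ u.rotate k ++ FreeGroup.invRev (p :: s')) =
              FreeGroup.mk [p] * FreeGroup.mk (s' ++ u.rotate k ++ FreeGroup.invRev s') *
                (FreeGroup.mk [p])⁻¹ := by
            rw [FreeGroup.inv_mk, invRev_single, ← FreeGroup.mul_mk, ← FreeGroup.mul_mk]
            rw [invRev_cons]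
            simp [List.append_assoc]
          rw [hstep, hW, mk_inv_single hcan]
          group
      · -- no cancellation: grow the conjugating word
        refine ⟨a :: p :: s', k, ?_, ?_⟩
        · rw [invRev_cons (x := a)]
          have hC : List.Chain' (fun c b => ¬ Canc c b)
              (([a] ++ ((p :: s') ++ u.rotate k ++ FreeGroup.invRev (p :: s'))) ++
                [(a.1, !a.2)]) := by
            rw [show List.Chain' = List.IsChain from rfl, List.isChain_append, List.isChain_append]
            refine ⟨⟨List.isChain_singleton a, hred, ?_⟩, List.isChain_singleton _, ?_⟩
            · intro c hc b hb
              simp only [List.getLast?_singleton, Option.mem_some_iff] at hc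
              subst hc
              simp only [List.cons_append, List.head?_cons, Option.mem_some_iff] at hb
              subst hb
              exact hcan
            · intro c hc b hb
              simp only [List.head?_singleton, Option.mem_some_iff] at hb
              subst hb
              simp only [invRev_cons, ← List.append_assoc] at hc
              rw [List.getLast?_concat, Option.mem_some_iff] at hc
              subst hc
              rintro ⟨h1, h2⟩
              exact hcan ⟨h1.symm, by simpa using h2.symm⟩
          have : (a :: p :: s') ++ u.rotate k ++
              (FreeGroup.invRev (p :: s') ++ [(a.1, !a.2)]) =
              ([a] ++ ((p :: s') ++ u.rotate k ++ FreeGroup.invRev (p :: s'))) ++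
                [(a.1, !a.2)] := by
            simp [List.append_assoc]
          rw [this]
          exact hC
        · rw [hstep, FreeGroup.inv_mk, invRev_single]
          simp only [FreeGroup.mul_mk]
          rw [invRev_cons (x := a)]
          congr 1
          simp [List.append_assoc]

end CRAux

/-- Lemma 4.8, key combinatorial step in the coding of primitive closed geodesics: two
cyclically reduced words representing conjugate elements of a free group are cyclic rotations
of one another. -/
theorem conj_cyclically_reduced_iff_rotate {α : Type*} [DecidableEq α]
    (L₁ L₂ : List (α × Bool))
    (h₁ : IsReducedWord L₁) (h₁c : IsCyclicallyReducedWord L₁)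
    (h₂ : IsReducedWord L₂) (h₂c : IsCyclicallyReducedWord L₂)
    (hconj : IsConj (FreeGroup.mk L₁) (FreeGroup.mk L₂)) :
    ∃ k : ℕ, L₂ = L₁.rotate k := by
  rw [isConj_iff] at hconj
  obtain ⟨c, hc⟩ := hconj
  rcases eq_or_ne L₁ [] with rfl | hne
  · refine ⟨0, ?_⟩
    rw [List.rotate_nil]
    apply CRAux.mk_inj h₂ (by constructor)
    rw [← hc, ← FreeGroup.one_eq_mk]
    simp
  · obtain ⟨s, k, hred, heq⟩ := CRAux.key L₁ h₁ h₁c hne c.toWord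
    rw [FreeGroup.mk_toWord, hc] at heq
    have hL₂ := CRAux.mk_inj h₂ hred heq
    rcases s with _ | ⟨p, s'⟩
    · refine ⟨k, ?_⟩
      simpa using hL₂
    · exfalso
      have hhead : L₂.head? = some p := by
        rw [hL₂]
        simp
    -- need getLast? = some (p.1,!p.2)
      have hlastW : ((p :: s') ++ L₁.rotate k ++ FreeGroup.invRev (p :: s')).getLast?
          = some (p.1, !p.2) := by
        rw [CRAux.invRev_cons]
        rw [← List.append_assoc]
        rw [List.getLast?_append_of_ne_nil _ (by simp)]
        simp
      have hlast : L₂.getLast? = some (p.1, !p.2) := by rw [hL₂]; exact hlastW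
      exact h₂c _ _ hlast hhead ⟨rfl, by simp⟩
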